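/- Let K be a number field and let Γ be a finitely generated subgroup of the multiplicative group K^×. Then rad_K(Γ) is a finitely generated group. -/

import Mathlib

open IsDedekindDomain NumberField
open scoped nonZeroDivisors

/-- In a commutative group, a subgroup contained in a f.g. subgroup is f.g. -/
lemma Subgroup.fg_of_le_fg {G : Type*} [CommGroup G] {H U : Subgroup G}
    (hU : U.FG) (hHU : H ≤ U) : H.FG := by
  have hU' : Group.FG U := (Group.fg_iff_subgroup_fg U).mpr hU
  have hmf : Module.Finite ℤ (Additive U) := Module.Finite.iff_addGroup_fg.mpr inferInstance
  have key : (H.subgroupOf U).FG := by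
    have hfg : (AddSubgroup.toIntSubmodule (Subgroup.toAddSubgroup (H.subgroupOf U))).FG :=
      IsNoetherian.noetherian _
    rw [Subgroup.fg_iff_add_fg]
    rwa [Submodule.fg_iff_addSubgroup_fg, AddSubgroup.toIntSubmodule_toAddSubgroup] at hfg
  have : Group.FG (H.subgroupOf U) := (Group.fg_iff_subgroup_fg _).mpr key
  have : Group.FG H :=
    Group.fg_of_surjective (f := (Subgroup.subgroupOfEquivOfLe hHU).toMonoidHom)
      (Subgroup.subgroupOfEquivOfLe hHU).surjective
  exact (Group.fg_iff_subgroup_fg H).mp this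

/-- Extension lemma: a subgroup of a commutative group is f.g. if its image under a
homomorphism and its intersection with the kernel are both f.g. -/
lemma Subgroup.fg_of_map_of_inf_ker {G A : Type*} [CommGroup G] [CommGroup A]
    (f : G →* A) {H : Subgroup G} (h1 : (H.map f).FG) (h2 : (H ⊓ f.ker).FG) : H.FG := by
  set ℓ := (MonoidHom.toAdditive f).toIntLinearMap
  have hmap : (AddSubgroup.toIntSubmodule (Subgroup.toAddSubgroup H)).map ℓ =
      AddSubgroup.toIntSubmodule (Subgroup.toAddSubgroup (H.map f)) := by
    ext x
    constructor
    · rintro h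
      obtain ⟨y, hy, rfl⟩ := Submodule.mem_map.mp h
      exact show Additive.toMul (ℓ y) ∈ H.map f from ⟨Additive.toMul y, hy, rfl⟩
    · rintro h
      obtain ⟨y, hy, rfl⟩ := Subgroup.mem_map.mp (show Additive.toMul x ∈ H.map f from h)
      exact Submodule.mem_map.mpr ⟨Additive.ofMul y, hy, rfl⟩
  have hker : LinearMap.ker ℓ = AddSubgroup.toIntSubmodule (Subgroup.toAddSubgroup f.ker) := by
    rw [AddMonoidHom.coe_toIntLinearMap_ker, MonoidHom.coe_toAdditive_ker]
  have hfg : (AddSubgroup.toIntSubmodule (Subgroup.toAddSubgroup H)).FG := by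
    refine Submodule.fg_of_fg_map_of_fg_inf_ker ℓ ?_ ?_
    · rw [hmap, Submodule.fg_iff_addSubgroup_fg, AddSubgroup.toIntSubmodule_toAddSubgroup,
        ← Subgroup.fg_iff_add_fg]
      exact h1
    · rw [hker, ← (AddSubgroup.toIntSubmodule (M := Additive G)).map_inf,
        ← (Subgroup.toAddSubgroup (G := G)).map_inf, Submodule.fg_iff_addSubgroup_fg,
        AddSubgroup.toIntSubmodule_toAddSubgroup, ← Subgroup.fg_iff_add_fg]
      exact h2
  rw [Subgroup.fg_iff_add_fg]
  rwa [Submodule.fg_iff_addSubgroup_fg, AddSubgroup.toIntSubmodule_toAddSubgroup] at hfg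

section MainAux

variable {K : Type*} [Field K] [NumberField K]

/-- The multiplicative `v`-adic "count" homomorphism on `Kˣ`. -/
noncomputable def cntHom (v : HeightOneSpectrum (𝓞 K)) : Kˣ →* Multiplicative ℤ where
  toFun α := Multiplicative.ofAdd
    (FractionalIdeal.count K v (FractionalIdeal.spanSingleton (𝓞 K)⁰ (α : K)))
  map_one' := by
    rw [Units.val_one, FractionalIdeal.spanSingleton_one, FractionalIdeal.count_one]
    rfl
  map_mul' a b := by
    rw [Units.val_mul, ← FractionalIdeal.spanSingleton_mul_spanSingleton,
      FractionalIdeal.count_mul K v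
        (FractionalIdeal.spanSingleton_ne_zero_iff.mpr a.ne_zero)
        (FractionalIdeal.spanSingleton_ne_zero_iff.mpr b.ne_zero)]
    rfl

lemma cntHom_apply (v : HeightOneSpectrum (𝓞 K)) (α : Kˣ) :
    (cntHom v α).toAdd
      = FractionalIdeal.count K v (FractionalIdeal.spanSingleton (𝓞 K)⁰ (α : K)) := rfl

end MainAux

section MainAux2

variable {K : Type*} [Field K] [NumberField K]

/-- An element of `Kˣ` whose principal fractional ideal has all counts zero comes from a
unit of the ring of integers. -/
lemma mem_unitsRange_of_counts_eq_zero {α : Kˣ}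
    (h : ∀ v : HeightOneSpectrum (𝓞 K),
      FractionalIdeal.count K v (FractionalIdeal.spanSingleton (𝓞 K)⁰ (α : K)) = 0) :
    α ∈ (Units.map (algebraMap (𝓞 K) K : (𝓞 K) →* K)).range := by
  have hne : FractionalIdeal.spanSingleton (𝓞 K)⁰ (α : K) ≠ 0 :=
    FractionalIdeal.spanSingleton_ne_zero_iff.mpr α.ne_zero
  have hspan : FractionalIdeal.spanSingleton (𝓞 K)⁰ (α : K) = 1 := by
    rw [← FractionalIdeal.finprod_heightOneSpectrum_factorization' K hne]
    simp only [h, zpow_zero]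
    exact finprod_one
  have hspaninv : FractionalIdeal.spanSingleton (𝓞 K)⁰ ((α : K)⁻¹) = 1 := by
    rw [← FractionalIdeal.one_div_spanSingleton, hspan, div_one]
  have hmemα : (α : K) ∈ (1 : FractionalIdeal (𝓞 K)⁰ K) := by
    rw [← hspan]; exact FractionalIdeal.mem_spanSingleton_self _ _
  have hmemαinv : ((α : K)⁻¹) ∈ (1 : FractionalIdeal (𝓞 K)⁰ K) := by
    rw [← hspaninv]; exact FractionalIdeal.mem_spanSingleton_self _ _
  obtain ⟨r, hr⟩ := (FractionalIdeal.mem_one_iff _).mp hmemα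
  obtain ⟨r', hr'⟩ := (FractionalIdeal.mem_one_iff _).mp hmemαinv
  have hinj := IsFractionRing.injective (𝓞 K) K
  have hrr' : r * r' = 1 := by
    apply hinj
    rw [map_mul, map_one, hr, hr', mul_inv_cancel₀ α.ne_zero]
  have hr'r : r' * r = 1 := by rw [mul_comm]; exact hrr'
  exact ⟨⟨r, r', hrr', hr'r⟩, Units.ext (by simpa using hr)⟩

end MainAux2


/-- The radical `rad_K(Γ) = { α ∈ K^× : α^l ∈ Γ for some l > 0 }` of a subgroup `Γ` of `K^×`. -/
def Subgroup.radOf {K : Type*} [Field K] (Γ : Subgroup Kˣ) : Subgroup Kˣ where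
  carrier := { α : Kˣ | ∃ l : ℕ, 0 < l ∧ α ^ l ∈ Γ }
  one_mem' := ⟨1, Nat.one_pos, by simpa using Γ.one_mem⟩
  mul_mem' := by
    rintro a b ⟨l, hl, ha⟩ ⟨j, hj, hb⟩
    refine ⟨l * j, Nat.mul_pos hl hj, ?_⟩
    rw [mul_pow]
    exact Γ.mul_mem (by rw [pow_mul]; exact pow_mem ha j)
      (by rw [mul_comm l j, pow_mul]; exact pow_mem hb l)
  inv_mem' := by
    rintro a ⟨l, hl, ha⟩
    exact ⟨l, hl, by rw [inv_pow]; exact Γ.inv_mem ha⟩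

/-- Lemma 2.15 of the paper. -/
theorem rad_fg_of_numberField
    (K : Type*) [Field K] [NumberField K]
    (Γ : Subgroup Kˣ) (hΓ : Γ.FG) : (Subgroup.radOf Γ).FG := by
  classical
  obtain ⟨T, hT⟩ := hΓ
  set H := Γ.radOf with hH
  -- the finite set of relevant primes
  set S : Set (HeightOneSpectrum (𝓞 K)) :=
    {v | ∃ g ∈ T, cntHom (K := K) v g ≠ 1} with hSdef
  have hSfin : S.Finite := by
    have hsub : S ⊆ ⋃ g ∈ (T : Set Kˣ),
        {v : HeightOneSpectrum (𝓞 K) |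
          FractionalIdeal.count K v (FractionalIdeal.spanSingleton (𝓞 K)⁰ (g : K)) ≠ 0} := by
      rintro v ⟨g, hgT, hg⟩
      refine Set.mem_biUnion hgT ?_
      intro h0
      exact hg (by
        apply Multiplicative.toAdd.injective
        simpa [cntHom_apply] using h0)
    refine Set.Finite.subset (Set.Finite.biUnion T.finite_toSet fun g _ => ?_) hsub
    exact Filter.eventually_cofinite.mp
      (FractionalIdeal.finite_factors (FractionalIdeal.spanSingleton (𝓞 K)⁰ (g : K)))
  -- counts vanish away from S on the radical
  have hawayS : ∀ α ∈ H, ∀ v : HeightOneSpectrum (𝓞 K), v ∉ S →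
      FractionalIdeal.count K v (FractionalIdeal.spanSingleton (𝓞 K)⁰ (α : K)) = 0 := by
    rintro α ⟨l, hl, hαl⟩ v hv
    have hgen : ∀ g ∈ (T : Set Kˣ), g ∈ (cntHom (K := K) v).ker := by
      intro g hg
      rw [MonoidHom.mem_ker]
      by_contra hne
      exact hv ⟨g, hg, hne⟩
    have hΓker : Γ ≤ (cntHom (K := K) v).ker := by
      rw [← hT]; exact (Subgroup.closure_le _).mpr hgen
    have h1 : (cntHom (K := K) v α) ^ l = 1 := by
      rw [← map_pow]; exact hΓker hαl
    have h2 : (l : ℤ) * (cntHom (K := K) v α).toAdd = 0 := by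
      have := congrArg Multiplicative.toAdd h1
      simpa [toAdd_pow, nsmul_eq_mul] using this
    have h3 : (cntHom (K := K) v α).toAdd = 0 := by
      rcases mul_eq_zero.mp h2 with h | h
      · exact absurd (Int.natCast_eq_zero.mp h) (Nat.pos_iff_ne_zero.mp hl)
      · exact h
    rw [← cntHom_apply]; exact h3
  -- the valuation vector homomorphism on the finite set S
  set V := hSfin.toFinset with hV
  set f : Kˣ →* Multiplicative (V → ℤ) :=
    { toFun := fun α => Multiplicative.ofAdd fun v => (cntHom (K := K) v.1 α).toAdd
      map_one' := by
        apply Multiplicative.toAdd.injective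
        funext v
        simp
      map_mul' := fun a b => by
        apply Multiplicative.toAdd.injective
        funext v
        simp } with hf
  -- image is f.g.
  have hGFGA : AddGroup.FG (V → ℤ) := Module.Finite.iff_addGroup_fg.mp inferInstance
  have h1 : (H.map f).FG :=
    Subgroup.fg_of_le_fg (Group.fg_def.mp inferInstance) le_top
  -- kernel part is f.g.
  have h2 : (H ⊓ f.ker).FG := by
    refine Subgroup.fg_of_le_fg (U := (Units.map (algebraMap (𝓞 K) K : (𝓞 K) →* K)).range) ?_ ?_
    · have : Group.FG (𝓞 K)ˣ := Group.fg_iff_monoid_fg.mpr inferInstance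
      exact (Group.fg_iff_subgroup_fg _).mp inferInstance
    · rintro α ⟨hαH, hαker⟩
      refine mem_unitsRange_of_counts_eq_zero ?_
      intro v
      by_cases hv : v ∈ S
      · have : f α = 1 := hαker
        have := congrFun (congrArg Multiplicative.toAdd this) ⟨v, hSfin.mem_toFinset.mpr hv⟩
        simpa [cntHom_apply, hf] using this
      · exact hawayS α hαH v hv
  exact Subgroup.fg_of_map_of_inf_ker f h1 h2
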